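/- Let ℬ be a set of letters, let a be a letter with a ∉ ℬ, and let t be a nonempty word over ℬ ∪ {a}. Then the word a·π_ℬ(t) (the concatenation of the single letter a with the projection of t onto ℬ) is a subword of t if and only if the first letter of t equals a. -/

import Mathlib

/-- Let `B` be a set of letters, `a ∉ B` a letter, and `t` a nonempty word over
`B ∪ {a}`. Then `a · π_B(t)` is a subword of `t` if and only if the first letter of `t`
is `a`. -/
theorem cons_proj_sublist_iff_head_eq {α : Type*} [DecidableEq α] (B : Finset α)
    (a : α) (ha : a ∉ B) (t : List α) (ht : t ≠ [])
    (hmem : ∀ x ∈ t, x ∈ B ∨ x = a) :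
    List.Sublist (a :: t.filter (fun x => decide (x ∈ B))) t ↔
      t.head ht = a := by
  obtain ⟨x, s, rfl⟩ := List.exists_cons_of_ne_nil ht
  simp only [List.head_cons]
  constructor
  · intro h
    by_contra hxa
    have hxB : x ∈ B := by
      rcases hmem x (by simp) with h' | h'
      · exact h'
      · exact absurd h' hxa
    have hax : a ≠ x := fun e => hxa e.symm
    rw [List.filter_cons_of_pos (by simp [hxB])] at h
    have h2 : List.Sublist (a :: x :: s.filter (fun x => decide (x ∈ B))) s := by
      cases h with
      | cons _ h' => exact h'
      | cons_cons _ h' => exact absurd rfl hax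
    have := h2.countP_le (p := fun y => decide (y ∈ B))
    simp only [List.countP_cons, decide_eq_true_eq] at this
    rw [List.countP_filter] at this
    simp [ha, hxB] at this
  · rintro rfl
    rw [List.filter_cons_of_neg (by simp [ha])]
    exact (List.filter_sublist (l := s)).cons₂ _
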